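/- Let A be a finitely generated abelian group. Then the short exact sequence 1 → ∇(A) → A ⊗ A → A ∧ A → 1 splits on the left (there is a homomorphism α : A ⊗ A → ∇(A) restricting to the identity on ∇(A)); consequently A ⊗ A ≅ ∇(A) × (A ∧ A). -/

import Mathlib

/- Nonabelian tensor square framework (Brown–Loday). -/

namespace NATensor

variable (G : Type*) [Group G]

/-- The relator set for the nonabelian tensor square of `G`:
`g g' ⊗ h = (ᵍg' ⊗ ᵍh)(g ⊗ h)` and `g ⊗ h h' = (g ⊗ h)(ʰg ⊗ ʰh')`. -/
def rels : Set (FreeGroup (G × G)) :=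
  {r | (∃ g g' h : G,
          r = FreeGroup.of (g * g', h) *
              (FreeGroup.of (g * g' * g⁻¹, g * h * g⁻¹) * FreeGroup.of (g, h))⁻¹) ∨
       (∃ g h h' : G,
          r = FreeGroup.of (g, h * h') *
              (FreeGroup.of (g, h) * FreeGroup.of (h * g * h⁻¹, h * h' * h⁻¹))⁻¹)}

/-- The nonabelian tensor square `G ⊗ G`. -/
abbrev TS := PresentedGroup (rels G)

variable {G}

/-- The generator `g ⊗ h` of the nonabelian tensor square. -/
def tmul (g h : G) : TS G := PresentedGroup.of (g, h)

lemma mk_rel_eq_one {r : FreeGroup (G × G)} (hr : r ∈ rels G) :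
    (PresentedGroup.mk (rels G) r : TS G) = 1 :=
  (QuotientGroup.eq_one_iff r).mpr (Subgroup.subset_normalClosure hr)

lemma tmul_rel₁ (g g' h : G) :
    tmul (g * g') h = tmul (g * g' * g⁻¹) (g * h * g⁻¹) * tmul g h := by
  have h1 := mk_rel_eq_one (G := G) (Or.inl ⟨g, g', h, rfl⟩)
  simp only [map_mul, map_inv, mul_inv_eq_one] at h1
  exact h1

lemma tmul_rel₂ (g h h' : G) :
    tmul g (h * h') = tmul g h * tmul (h * g * h⁻¹) (h * h' * h⁻¹) := by
  have h1 := mk_rel_eq_one (G := G) (Or.inr ⟨g, h, h', rfl⟩)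
  simp only [map_mul, map_inv, mul_inv_eq_one] at h1
  exact h1

variable (G)

/-- The homomorphism `κ : G ⊗ G → G`, `g ⊗ h ↦ [g,h] = g h g⁻¹ h⁻¹` (its image is `[G,G]`). -/
def kappa : TS G →* G :=
  PresentedGroup.toGroup (f := fun x : G × G => x.1 * x.2 * x.1⁻¹ * x.2⁻¹) (by
    rintro r (⟨g, g', h, rfl⟩ | ⟨g, h, h', rfl⟩) <;>
      simp only [map_mul, map_inv, FreeGroup.lift_apply_of] <;> group)

variable {G}

@[simp] lemma kappa_tmul (g h : G) : kappa G (tmul g h) = g * h * g⁻¹ * h⁻¹ :=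
  PresentedGroup.toGroup.of _

variable (G)

/-- `J(G) = ker κ ≅ π₃(SK(G,1))`. -/
def J : Subgroup (TS G) := (kappa G).ker

/-- `∇(G)`: the (normal) subgroup of `G ⊗ G` generated by the elements `x ⊗ x`. -/
def nabla : Subgroup (TS G) :=
  Subgroup.normalClosure {t | ∃ x : G, t = tmul x x}

/-- `Δ(G)`: the (normal) subgroup of `G ⊗ G` generated by the `(x ⊗ y)(y ⊗ x)`. -/
def delta : Subgroup (TS G) :=
  Subgroup.normalClosure {t | ∃ x y : G, t = tmul x y * tmul y x}

instance : (nabla G).Normal := Subgroup.normalClosure_normal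

instance : (delta G).Normal := Subgroup.normalClosure_normal

/-- The exterior square `G ∧ G = (G ⊗ G)/∇(G)`. -/
abbrev ES := TS G ⧸ nabla G

/-- The symmetric square `G ⊗̃ G = (G ⊗ G)/Δ(G)`. -/
abbrev SS := TS G ⧸ delta G

variable {G}

/-- The element `g ∧ h` of the exterior square. -/
def emul (g h : G) : ES G := QuotientGroup.mk' (nabla G) (tmul g h)

/-- The image of `g ⊗ h` in the symmetric square. -/
def smul (g h : G) : SS G := QuotientGroup.mk' (delta G) (tmul g h)

variable {H : Type*} [Group H]

/-- The induced homomorphism `G ⊗ G → H ⊗ H` of a homomorphism `f : G → H`. -/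
def tmap (f : G →* H) : TS G →* TS H :=
  PresentedGroup.toGroup (f := fun x : G × G => tmul (f x.1) (f x.2)) (by
    rintro r (⟨g, g', h, rfl⟩ | ⟨g, h, h', rfl⟩) <;>
      simp only [map_mul, map_inv, FreeGroup.lift_apply_of, mul_inv_eq_one]
    · rw [tmul_rel₁]
    · rw [tmul_rel₂])

@[simp] lemma tmap_tmul (f : G →* H) (g h : G) :
    tmap f (tmul g h) = tmul (f g) (f h) :=
  PresentedGroup.toGroup.of _

lemma nabla_le_comap_nabla (f : G →* H) :
    nabla G ≤ MonoidHom.ker ((QuotientGroup.mk' (nabla H)).comp (tmap f)) := by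
  refine Subgroup.normalClosure_le_normal ?_
  rintro _ ⟨y, rfl⟩
  simp only [SetLike.mem_coe, MonoidHom.mem_ker, MonoidHom.comp_apply, tmap_tmul,
    QuotientGroup.mk'_apply, QuotientGroup.eq_one_iff]
  exact Subgroup.subset_normalClosure ⟨f y, rfl⟩

lemma delta_le_comap_delta (f : G →* H) :
    delta G ≤ MonoidHom.ker ((QuotientGroup.mk' (delta H)).comp (tmap f)) := by
  refine Subgroup.normalClosure_le_normal ?_
  rintro _ ⟨x, y, rfl⟩
  simp only [SetLike.mem_coe, MonoidHom.mem_ker, MonoidHom.comp_apply, map_mul, tmap_tmul,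
    QuotientGroup.mk'_apply, ← QuotientGroup.mk_mul, QuotientGroup.eq_one_iff]
  exact Subgroup.subset_normalClosure ⟨f x, f y, rfl⟩

/-- The induced homomorphism `G ∧ G → H ∧ H` of a homomorphism `f : G → H`. -/
def emap (f : G →* H) : ES G →* ES H :=
  QuotientGroup.lift (nabla G) ((QuotientGroup.mk' (nabla H)).comp (tmap f))
    (fun x hx => MonoidHom.mem_ker.mp (nabla_le_comap_nabla f hx))

@[simp] lemma emap_emul (f : G →* H) (g h : G) :
    emap f (emul g h) = emul (f g) (f h) := by
  simp [emap, emul, QuotientGroup.mk'_apply, QuotientGroup.lift_mk']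
  exact congrArg (QuotientGroup.mk (s := nabla H)) (tmap_tmul f g h)

/-- The induced homomorphism `G ⊗̃ G → H ⊗̃ H` of a homomorphism `f : G → H`. -/
def smap (f : G →* H) : SS G →* SS H :=
  QuotientGroup.lift (delta G) ((QuotientGroup.mk' (delta H)).comp (tmap f))
    (fun x hx => MonoidHom.mem_ker.mp (delta_le_comap_delta f hx))

variable (G)

lemma nabla_le_ker_kappa : nabla G ≤ (kappa G).ker := by
  refine Subgroup.normalClosure_le_normal ?_
  rintro _ ⟨x, rfl⟩
  simp only [SetLike.mem_coe, MonoidHom.mem_ker, kappa_tmul]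
  group

/-- The homomorphism `κ' : G ∧ G → G`, `g ∧ h ↦ [g,h]` (its image is `[G,G]`). -/
def kappa' : ES G →* G :=
  QuotientGroup.lift (nabla G) (kappa G)
    (fun x hx => MonoidHom.mem_ker.mp (nabla_le_ker_kappa G hx))

/-- The Schur multiplier `M(G) = ker κ' ≅ H₂(G)`. -/
def M : Subgroup (ES G) := (kappa' G).ker

/-- `J̃(G) = J(G)/Δ(G) ≅ π₂ˢ(K(G,1))`, realized as the image of `J(G)` in `G ⊗̃ G`. -/
def Jt : Subgroup (SS G) := Subgroup.map (QuotientGroup.mk' (delta G)) (J G)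

/-- `∇(G)/Δ(G)`, realized as the image of `∇(G)` in `G ⊗̃ G`. -/
def nablaBar : Subgroup (SS G) := Subgroup.map (QuotientGroup.mk' (delta G)) (nabla G)

end NATensor

section CommCase

open TensorProduct DirectSum

open TensorProduct DirectSum

section Dec
variable {M : Type*} [AddCommGroup M]

/-- cyclic decomposition data -/
def IsCycDec {ι : Type*} [Fintype ι] (p : ι → (M →ₗ[ℤ] M)) (g : ι → M) : Prop :=
  (∑ i, p i) = LinearMap.id ∧ ∀ i x, ∃ a : ℤ, p i x = a • g i

lemma IsCycDec.reindex {ι ι' : Type*} [Fintype ι] [Fintype ι'] {p : ι → (M →ₗ[ℤ] M)}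
    {g : ι → M} (e : ι' ≃ ι) (hd : IsCycDec p g) : IsCycDec (p ∘ e) (g ∘ e) := by
  refine ⟨?_, fun i x => hd.2 (e i) x⟩
  rw [← hd.1]
  exact Fintype.sum_equiv e _ _ (fun i => rfl)

lemma IsCycDec.transport {M' : Type*} [AddCommGroup M'] (e : M' ≃ₗ[ℤ] M) {ι : Type*} [Fintype ι]
    {p : ι → (M' →ₗ[ℤ] M')} {g : ι → M'} (hd : IsCycDec p g) :
    IsCycDec (fun i => e.toLinearMap ∘ₗ (p i) ∘ₗ e.symm.toLinearMap) (fun i => e (g i)) := by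
  constructor
  · ext x
    have h1 : ∑ i, (p i) (e.symm x) = e.symm x := by
      simpa using LinearMap.congr_fun hd.1 (e.symm x)
    simp only [LinearMap.sum_apply, LinearMap.comp_apply, LinearEquiv.coe_coe, LinearMap.id_apply]
    rw [← map_sum, h1, e.apply_symm_apply]
  · intro i x
    obtain ⟨a, ha⟩ := hd.2 i (e.symm x)
    exact ⟨a, by simp [ha]⟩

lemma IsCycDec.prod {M' : Type*} [AddCommGroup M'] {ι κ : Type*} [Fintype ι] [Fintype κ]
    {p : ι → (M →ₗ[ℤ] M)} {g : ι → M} {q : κ → (M' →ₗ[ℤ] M')} {h : κ → M'}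
    (hp : IsCycDec p g) (hq : IsCycDec q h) :
    IsCycDec (M := M × M')
      (Sum.elim
        (fun i => (LinearMap.inl ℤ M M') ∘ₗ (p i) ∘ₗ (LinearMap.fst ℤ M M'))
        (fun j => (LinearMap.inr ℤ M M') ∘ₗ (q j) ∘ₗ (LinearMap.snd ℤ M M')))
      (Sum.elim (fun i => (g i, 0)) (fun j => (0, h j))) := by
  constructor
  · have h1 : ∀ w : M, ∑ i, (p i) w = w := fun w => by
      simpa using LinearMap.congr_fun hp.1 w
    have h2 : ∀ w : M', ∑ j, (q j) w = w := fun w => by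
      simpa using LinearMap.congr_fun hq.1 w
    ext z <;>
      simp [Fintype.sum_sum_type, LinearMap.sum_apply, Prod.fst_sum, Prod.snd_sum, h1, h2]
  · rintro (i | j) z
    · obtain ⟨a, ha⟩ := hp.2 i z.1
      exact ⟨a, by simp [ha, Prod.smul_def]⟩
    · obtain ⟨a, ha⟩ := hq.2 j z.2
      exact ⟨a, by simp [ha, Prod.smul_def]⟩

lemma IsCycDec.directSum {ι : Type*} [Fintype ι] [DecidableEq ι] (C : ι → Type*)
    [∀ i, AddCommGroup (C i)] (c : ∀ i, C i) (hcyc : ∀ i (x : C i), ∃ a : ℤ, x = a • c i) :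
    IsCycDec (M := (⨁ i, C i))
      (fun i => (DirectSum.lof ℤ ι C i) ∘ₗ (DirectSum.component ℤ ι C i))
      (fun i => DirectSum.lof ℤ ι C i (c i)) := by
  constructor
  · refine LinearMap.ext fun x => ?_
    simp only [LinearMap.sum_apply, LinearMap.comp_apply, LinearMap.id_apply]
    exact DirectSum.sum_univ_of x
  · intro i x
    obtain ⟨a, ha⟩ := hcyc i (DirectSum.component ℤ ι C i x)
    exact ⟨a, by rw [LinearMap.comp_apply, ha, map_smul]⟩

lemma cyclic_decomposition (M : Type*) [AddCommGroup M] [Module.Finite ℤ M] :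
    ∃ (n : ℕ) (p : Fin n → (M →ₗ[ℤ] M)) (g : Fin n → M), IsCycDec p g := by
  classical
  obtain ⟨n, ι, hι, P, hP, ee, ⟨f⟩⟩ :=
    Module.equiv_free_prod_directSum (R := ℤ) (M := M)
  have hcycZ : ∀ (_ : Fin n) (x : ℤ), ∃ a : ℤ, x = a • (1 : ℤ) := fun _ x => ⟨x, by simp⟩
  have dec1 := (IsCycDec.directSum (ι := Fin n) (fun _ => ℤ) (fun _ => (1 : ℤ)) hcycZ).transport
    (finsuppLEquivDirectSum ℤ ℤ (Fin n)).symm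
  have hcycQ : ∀ (i : ι) (x : ℤ ⧸ (ℤ ∙ P i ^ ee i)),
      ∃ a : ℤ, x = a • Submodule.Quotient.mk (1 : ℤ) := by
    intro i x
    obtain ⟨a, rfl⟩ := Submodule.Quotient.mk_surjective _ x
    exact ⟨a, by rw [← Submodule.Quotient.mk_smul, smul_eq_mul, mul_one]⟩
  have dec2 := IsCycDec.directSum (ι := ι) (fun i => ℤ ⧸ (ℤ ∙ P i ^ ee i))
    (fun i => Submodule.Quotient.mk (1 : ℤ)) hcycQ
  have dec3 := (dec1.prod dec2).transport f.symm
  have dec4 := dec3.reindex (Fintype.equivFin (Fin n ⊕ ι)).symm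
  exact ⟨_, _, _, dec4⟩

lemma module_retraction (M : Type*) [AddCommGroup M] [Module.Finite ℤ M] :
    ∃ B : M ⊗[ℤ] M →ₗ[ℤ] M ⊗[ℤ] M,
      (∀ z, B z ∈ Submodule.span ℤ {z : M ⊗[ℤ] M | ∃ a : M, z = a ⊗ₜ[ℤ] a}) ∧
      (∀ z ∈ Submodule.span ℤ {z : M ⊗[ℤ] M | ∃ a : M, z = a ⊗ₜ[ℤ] a}, B z = z) := by
  obtain ⟨n, p, g, hsum, hcyc⟩ := cyclic_decomposition M
  set N : Submodule ℤ (M ⊗[ℤ] M) := Submodule.span ℤ {z : M ⊗[ℤ] M | ∃ a : M, z = a ⊗ₜ[ℤ] a}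
    with hN
  have hdiag : ∀ a : M, a ⊗ₜ[ℤ] a ∈ N := fun a => Submodule.subset_span ⟨a, rfl⟩
  set F := fun q : Fin n × Fin n =>
    if q.1 < q.2 then
      TensorProduct.map (p q.1) (p q.2) +
        (TensorProduct.comm ℤ M M).toLinearMap ∘ₗ TensorProduct.map (p q.1) (p q.2)
    else if q.1 = q.2 then TensorProduct.map (p q.1) (p q.2) else 0 with hF
  set B := ∑ q : Fin n × Fin n, F q with hB
  have hpair : ∀ x y : M, x ⊗ₜ[ℤ] y + y ⊗ₜ[ℤ] x ∈ N := by
    intro x y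
    have h1 : (x + y) ⊗ₜ[ℤ] (x + y) = x ⊗ₜ[ℤ] x + (x ⊗ₜ[ℤ] y + y ⊗ₜ[ℤ] x) + y ⊗ₜ[ℤ] y := by
      simp only [TensorProduct.add_tmul, TensorProduct.tmul_add]; abel
    have h2 : x ⊗ₜ[ℤ] y + y ⊗ₜ[ℤ] x =
        (x + y) ⊗ₜ[ℤ] (x + y) - x ⊗ₜ[ℤ] x - y ⊗ₜ[ℤ] y := by rw [h1]; abel
    rw [h2]
    exact Submodule.sub_mem _ (Submodule.sub_mem _ (hdiag _) (hdiag _)) (hdiag _)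
  have hFq : ∀ q : Fin n × Fin n, ∀ x y : M, F q (x ⊗ₜ[ℤ] y) ∈ N := by
    rintro ⟨i, j⟩ x y
    obtain ⟨a, ha⟩ := hcyc i x
    obtain ⟨c, hc⟩ := hcyc j y
    simp only [hF]
    split_ifs with h1 h2
    · simp only [LinearMap.add_apply, LinearMap.comp_apply, TensorProduct.map_tmul,
        LinearEquiv.coe_coe, TensorProduct.comm_tmul, ha, hc]
      rw [TensorProduct.smul_tmul_smul, TensorProduct.smul_tmul_smul, mul_comm c a, ← smul_add]
      exact Submodule.smul_mem _ _ (hpair _ _)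
    · subst h2
      obtain ⟨c', hc'⟩ := hcyc i y
      simp only [TensorProduct.map_tmul, ha, hc']
      rw [TensorProduct.smul_tmul_smul]
      exact Submodule.smul_mem _ _ (hdiag _)
    · simpa using N.zero_mem
  have hBmem : ∀ z, B z ∈ N := by
    have hFmem : ∀ q : Fin n × Fin n, ∀ z, F q z ∈ N := by
      intro q z
      have hle : (⊤ : Submodule ℤ (M ⊗[ℤ] M)) ≤ N.comap (F q) := by
        refine (TensorProduct.span_tmul_eq_top ℤ M M).symm.le.trans (Submodule.span_le.mpr ?_)
        rintro _ ⟨x, y, rfl⟩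
        exact hFq q x y
      exact hle trivial
    intro z
    rw [hB]
    simp only [LinearMap.sum_apply]
    exact Submodule.sum_mem _ fun q _ => hFmem q z
  have hBdiag : ∀ a : M, B (a ⊗ₜ[ℤ] a) = a ⊗ₜ[ℤ] a := by
    intro a
    have key : ∀ q : Fin n × Fin n, F q (a ⊗ₜ[ℤ] a) =
        (if q.1 ≤ q.2 then (p q.1 a) ⊗ₜ[ℤ] (p q.2 a) else 0) +
        (if q.1 < q.2 then (p q.2 a) ⊗ₜ[ℤ] (p q.1 a) else 0) := by
      rintro ⟨i, j⟩
      simp only [hF]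
      rcases lt_trichotomy i j with hij | hij | hij
      · rw [if_pos hij, if_pos hij.le, if_pos hij]
        simp
      · rw [if_neg (by simp [hij]), if_pos hij, if_pos hij.le, if_neg (by simp [hij]), add_zero]
        simp
      · rw [if_neg (by omega), if_neg (by omega), if_neg (by omega), if_neg (by omega), add_zero]
        exact LinearMap.zero_apply _
    have hsum1 : ∑ q : Fin n × Fin n, (p q.1 a) ⊗ₜ[ℤ] (p q.2 a) = a ⊗ₜ[ℤ] a := by
      rw [Fintype.sum_prod_type]
      have hrow : ∀ i : Fin n, ∑ j : Fin n, (p i a) ⊗ₜ[ℤ] (p j a) = (p i a) ⊗ₜ[ℤ] a := by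
        intro i
        rw [← TensorProduct.tmul_sum]
        congr 1
        simpa using LinearMap.congr_fun hsum a
      rw [Finset.sum_congr rfl fun i _ => hrow i, ← TensorProduct.sum_tmul]
      congr 1
      simpa using LinearMap.congr_fun hsum a
    have hswap : ∑ q : Fin n × Fin n, (if q.1 < q.2 then (p q.2 a) ⊗ₜ[ℤ] (p q.1 a) else 0)
        = ∑ q : Fin n × Fin n, (if q.2 < q.1 then (p q.1 a) ⊗ₜ[ℤ] (p q.2 a) else 0) :=
      Fintype.sum_equiv (Equiv.prodComm (Fin n) (Fin n)) _ _ (fun q => rfl)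
    calc B (a ⊗ₜ[ℤ] a) = ∑ q : Fin n × Fin n, F q (a ⊗ₜ[ℤ] a) := by
          rw [hB]; simp [LinearMap.sum_apply]
      _ = ∑ q : Fin n × Fin n, ((if q.1 ≤ q.2 then (p q.1 a) ⊗ₜ[ℤ] (p q.2 a) else 0) +
            (if q.1 < q.2 then (p q.2 a) ⊗ₜ[ℤ] (p q.1 a) else 0)) :=
          Finset.sum_congr rfl fun q _ => key q
      _ = ∑ q : Fin n × Fin n, (if q.1 ≤ q.2 then (p q.1 a) ⊗ₜ[ℤ] (p q.2 a) else 0) +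
            ∑ q : Fin n × Fin n, (if q.2 < q.1 then (p q.1 a) ⊗ₜ[ℤ] (p q.2 a) else 0) := by
          rw [Finset.sum_add_distrib, hswap]
      _ = ∑ q : Fin n × Fin n, (p q.1 a) ⊗ₜ[ℤ] (p q.2 a) := by
          rw [← Finset.sum_add_distrib]
          refine Finset.sum_congr rfl fun q _ => ?_
          by_cases hq : q.1 ≤ q.2
          · rw [if_pos hq, if_neg (by omega), add_zero]
          · rw [if_neg hq, if_pos (by omega), zero_add]
      _ = a ⊗ₜ[ℤ] a := hsum1
  refine ⟨B, hBmem, fun z hz => ?_⟩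
  induction hz using Submodule.span_induction with
  | mem z hzz => obtain ⟨a, rfl⟩ := hzz; exact hBdiag a
  | zero => exact map_zero B
  | add u v _ _ hu hv => exact (map_add B u v).trans (congrArg₂ _ hu hv)
  | smul r u _ hu => exact (map_smul B r u).trans (congrArg _ hu)

end Dec


namespace NATensor

variable {A : Type*} [CommGroup A]

private lemma conj_eq (g h : A) : g * h * g⁻¹ = h := by
  rw [mul_comm g h, mul_inv_cancel_right]

lemma tmul_mul_left (g g' h : A) : tmul (g * g') h = tmul g' h * tmul g h := by
  have hh := tmul_rel₁ g g' h
  rwa [conj_eq, conj_eq] at hh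

lemma tmul_mul_right (g h h' : A) : tmul g (h * h') = tmul g h * tmul g h' := by
  have hh := tmul_rel₂ g h h'
  rwa [conj_eq, conj_eq] at hh

lemma commute_tmul (a b c d : A) : Commute (tmul a b) (tmul c d) := by
  have h1 : tmul (a * c) (b * d) = tmul c b * tmul c d * (tmul a b * tmul a d) := by
    rw [tmul_mul_left, tmul_mul_right, tmul_mul_right]
  have h2 : tmul (a * c) (b * d) = tmul c b * tmul a b * (tmul c d * tmul a d) := by
    rw [tmul_mul_right, tmul_mul_left, tmul_mul_left]
  have h3 := h1.symm.trans h2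
  rw [mul_assoc, mul_assoc] at h3
  have h4 := mul_left_cancel h3
  rw [← mul_assoc, ← mul_assoc] at h4
  exact (mul_right_cancel h4).symm

instance instCommGroupTS : CommGroup (TS A) :=
  { (inferInstance : Group (TS A)) with
    mul_comm := fun x y => by
      have hx : x ∈ Subgroup.closure (Set.range (PresentedGroup.of : A × A → TS A)) := by
        rw [PresentedGroup.closure_range_of]; trivial
      have hy : y ∈ Subgroup.closure (Set.range (PresentedGroup.of : A × A → TS A)) := by
        rw [PresentedGroup.closure_range_of]; trivial
      refine Subgroup.closure_induction₂ (p := fun x y _ _ => Commute x y) ?_ ?_ ?_ ?_ ?_ ?_ ?_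
        hx hy
      · rintro _ _ ⟨⟨a, b⟩, rfl⟩ ⟨⟨c, d⟩, rfl⟩
        exact commute_tmul a b c d
      · exact fun z _ => Commute.one_left z
      · exact fun z _ => Commute.one_right z
      · exact fun u v w _ _ _ h1 h2 => h1.mul_left h2
      · exact fun u v w _ _ _ h1 h2 => h1.mul_right h2
      · exact fun u v _ _ h => h.inv_left
      · exact fun u v _ _ h => h.inv_right }

/-- The tensor square of an abelian group as an abelian tensor product. -/
noncomputable def phi : TS A →* Multiplicative (Additive A ⊗[ℤ] Additive A) :=
  PresentedGroup.toGroup (f := fun x : A × A =>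
    Multiplicative.ofAdd (Additive.ofMul x.1 ⊗ₜ[ℤ] Additive.ofMul x.2)) (by
      rintro r (⟨g, g', h, rfl⟩ | ⟨g, h, h', rfl⟩) <;>
        simp only [map_mul, map_inv, FreeGroup.lift_apply_of] <;>
        rw [conj_eq, conj_eq, mul_inv_eq_one, ← ofAdd_add] <;>
        refine congrArg Multiplicative.ofAdd ?_
      · show (Additive.ofMul (g * g')) ⊗ₜ[ℤ] (Additive.ofMul h) = _
        rw [ofMul_mul, TensorProduct.add_tmul]
        abel
      · show (Additive.ofMul g) ⊗ₜ[ℤ] (Additive.ofMul (h * h')) = _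
        rw [ofMul_mul, TensorProduct.tmul_add])

@[simp] lemma phi_tmul (g h : A) :
    phi (tmul g h) = Multiplicative.ofAdd (Additive.ofMul g ⊗ₜ[ℤ] Additive.ofMul h) :=
  PresentedGroup.toGroup.of _

/-- The bilinear map underlying the inverse. -/
def psiA : Additive A →+ Additive A →+ Additive (TS A) :=
  AddMonoidHom.mk'
    (fun a => AddMonoidHom.mk' (fun b => Additive.ofMul (tmul a.toMul b.toMul))
      (fun b b' => congrArg Additive.ofMul (tmul_mul_right _ _ _)))
    (fun a a' => by
      refine AddMonoidHom.ext fun b => ?_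
      show Additive.ofMul (tmul (a.toMul * a'.toMul) b.toMul) = _
      rw [tmul_mul_left]
      exact congrArg Additive.ofMul (mul_comm _ _))

noncomputable def psi : (Additive A ⊗[ℤ] Additive A) →+ Additive (TS A) :=
  TensorProduct.liftAddHom psiA (fun r m n => by
    have h1 : psiA (r • m) n = r • psiA m n := by
      rw [← AddMonoidHom.flip_apply, map_zsmul, AddMonoidHom.flip_apply]
    rw [h1, ← map_zsmul])

@[simp] lemma psi_tmul (a b : Additive A) :
    psi (a ⊗ₜ[ℤ] b) = Additive.ofMul (tmul a.toMul b.toMul) :=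
  TensorProduct.liftAddHom_tmul _ _ _ _

/-- `A ⊗ A` is the abelian tensor square for abelian `A`. -/
noncomputable def phiEquiv : TS A ≃* Multiplicative (Additive A ⊗[ℤ] Additive A) where
  toFun := phi
  invFun := fun t => (psi t.toAdd).toMul
  map_mul' := map_mul phi
  left_inv := by
    have key : (AddMonoidHom.toMultiplicativeLeft psi).comp phi = MonoidHom.id (TS A) := by
      refine PresentedGroup.ext fun x => ?_
      show (psi ((phi (tmul x.1 x.2)).toAdd)).toMul = tmul x.1 x.2
      rw [phi_tmul]
      simp
    intro x
    exact DFunLike.congr_fun key x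
  right_inv := by
    have key : ∀ z : Additive A ⊗[ℤ] Additive A, phi ((psi z).toMul) = Multiplicative.ofAdd z := by
      intro z
      induction z using TensorProduct.induction_on with
      | zero => simp
      | tmul a b => simp
      | add u v hu hv => rw [map_add, toMul_add, map_mul, hu, hv, ofAdd_add]
    intro t
    exact (key t.toAdd).trans (ofAdd_toAdd t)

@[simp] lemma phiEquiv_tmul (g h : A) :
    phiEquiv (tmul g h) = Multiplicative.ofAdd (Additive.ofMul g ⊗ₜ[ℤ] Additive.ofMul h) :=
  phi_tmul g h

/-- The span of the diagonal. -/
def NN (A : Type*) [CommGroup A] : Submodule ℤ (Additive A ⊗[ℤ] Additive A) :=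
  Submodule.span ℤ {z : Additive A ⊗[ℤ] Additive A | ∃ a : Additive A, z = a ⊗ₜ[ℤ] a}

lemma mem_nabla_of (x : TS A) (hx : x ∈ nabla A) : (phiEquiv x).toAdd ∈ NN A := by
  set K : Subgroup (TS A) :=
    { carrier := {x : TS A | (phiEquiv x).toAdd ∈ NN A}
      one_mem' := by simp [Submodule.zero_mem]
      mul_mem' := fun {a b} ha hb => by
        simp only [Set.mem_setOf_eq, map_mul, toAdd_mul] at ha hb ⊢
        exact (NN A).add_mem ha hb
      inv_mem' := fun {a} ha => by
        simp only [Set.mem_setOf_eq, map_inv, toAdd_inv] at ha ⊢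
        exact (NN A).neg_mem ha } with hK
  have hle : nabla A ≤ K := by
    refine Subgroup.normalClosure_le_normal ?_
    rintro _ ⟨y, rfl⟩
    show (phiEquiv (tmul y y)).toAdd ∈ NN A
    rw [phiEquiv_tmul]
    exact Submodule.subset_span ⟨Additive.ofMul y, rfl⟩
  exact hle hx

lemma symm_mem_nabla {z : Additive A ⊗[ℤ] Additive A} (hz : z ∈ NN A) :
    phiEquiv.symm (Multiplicative.ofAdd z) ∈ nabla A := by
  induction hz using Submodule.span_induction with
  | mem w hw =>
      obtain ⟨a, rfl⟩ := hw
      have : phiEquiv.symm (Multiplicative.ofAdd (a ⊗ₜ[ℤ] a)) = tmul a.toMul a.toMul := by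
        rw [MulEquiv.symm_apply_eq, phiEquiv_tmul]
        simp
      rw [this]
      exact Subgroup.subset_normalClosure ⟨a.toMul, rfl⟩
  | zero =>
      have : Multiplicative.ofAdd (0 : Additive A ⊗[ℤ] Additive A) = 1 := rfl
      rw [this, map_one]
      exact (nabla A).one_mem
  | add u v _ _ hu hv =>
      rw [ofAdd_add, map_mul]
      exact (nabla A).mul_mem hu hv
  | smul r u _ hu =>
      rw [ofAdd_zsmul, map_zpow]
      exact (nabla A).zpow_mem hu r

lemma mem_nabla_iff (x : TS A) : x ∈ nabla A ↔ (phiEquiv x).toAdd ∈ NN A := by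
  refine ⟨mem_nabla_of x, fun hx => ?_⟩
  have := symm_mem_nabla hx
  rwa [ofAdd_toAdd, MulEquiv.symm_apply_apply] at this

end NATensor

/-- A retraction onto a normal subgroup yields a product decomposition. -/
lemma subgroup_retract_equiv {G : Type*} [Group G] (H : Subgroup G) [H.Normal]
    (r : G →* H) (hr : ∀ y : H, r (y : G) = y) : Nonempty (G ≃* H × (G ⧸ H)) := by
  refine ⟨MulEquiv.ofBijective (r.prod (QuotientGroup.mk' H)) ⟨?_, ?_⟩⟩
  · rw [← MonoidHom.ker_eq_bot_iff, eq_bot_iff]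
    intro x hx
    simp only [MonoidHom.mem_ker, MonoidHom.prod_apply, Prod.mk_eq_one] at hx
    obtain ⟨hx1, hx2⟩ := hx
    have hmem : x ∈ H := (QuotientGroup.eq_one_iff x).mp hx2
    have : r ((⟨x, hmem⟩ : H) : G) = ⟨x, hmem⟩ := hr _
    rw [hx1] at this
    have hx1' : x = 1 := by
      have := congrArg (Subtype.val) this
      simpa using this.symm
    simp [hx1']
  · rintro ⟨h, q⟩
    obtain ⟨g, rfl⟩ := QuotientGroup.mk'_surjective H q
    refine ⟨(h : G) * ((r g : G))⁻¹ * g, ?_⟩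
    have hH1 : QuotientGroup.mk' H (h : G) = 1 := (QuotientGroup.eq_one_iff _).mpr h.2
    have hH2 : QuotientGroup.mk' H ((r g : G) : G) = 1 := (QuotientGroup.eq_one_iff _).mpr (r g).2
    have hr1 : r ((h : G)) = h := hr h
    have hr2 : r (((r g : H) : G)) = r g := hr (r g)
    refine Prod.ext ?_ ?_
    · simp [map_mul, map_inv, hr1, hr2]
    · simp [map_mul, map_inv, hH1, hH2]

end CommCase


open NATensor in
/-- for a finitely generated abelian group `A`, the short exact sequence
`1 → ∇(A) → A ⊗ A → A ∧ A → 1` splits on the left (there is a homomorphism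
`α : A ⊗ A → ∇(A)` restricting to the identity on `∇(A)`); consequently
`A ⊗ A ≅ ∇(A) × (A ∧ A)`. -/
theorem tensor_square_splits_of_fg_abelian (A : Type*) [CommGroup A] [Group.FG A] :
    (∃ α : TS A →* ↥(nabla A), ∀ y : ↥(nabla A), α (y : TS A) = y) ∧
    Nonempty (TS A ≃* ↥(nabla A) × ES A) := by
  haveI : Module.Finite ℤ (Additive A) := Module.Finite.iff_addGroup_fg.mpr inferInstance
  obtain ⟨B, hBmem, hBfix⟩ := module_retraction (Additive A)
  have hmem : ∀ x : TS A,
      phiEquiv.symm (AddMonoidHom.toMultiplicative B.toAddMonoidHom (phiEquiv x)) ∈ nabla A := by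
    intro x
    rw [mem_nabla_iff, MulEquiv.apply_symm_apply]
    show (Multiplicative.ofAdd (B ((phiEquiv x).toAdd))).toAdd ∈ NN A
    rw [toAdd_ofAdd]
    exact hBmem _
  set α0 : TS A →* TS A := (phiEquiv.symm.toMonoidHom.comp
    ((AddMonoidHom.toMultiplicative B.toAddMonoidHom).comp phiEquiv.toMonoidHom)) with hα0
  have hα0app : ∀ x : TS A,
      α0 x = phiEquiv.symm (AddMonoidHom.toMultiplicative B.toAddMonoidHom (phiEquiv x)) :=
    fun x => rfl
  set α : TS A →* ↥(nabla A) := α0.codRestrict (nabla A) (fun x => hmem x) with hαdef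
  have hα : ∀ y : ↥(nabla A), α ((y : TS A)) = y := by
    intro y
    apply Subtype.ext
    show α0 (y : TS A) = (y : TS A)
    rw [hα0app]
    have h1 : (phiEquiv ((y : TS A))).toAdd ∈ NN A := mem_nabla_of _ y.2
    have h2 : AddMonoidHom.toMultiplicative B.toAddMonoidHom (phiEquiv (y : TS A))
        = phiEquiv (y : TS A) := by
      show Multiplicative.ofAdd (B ((phiEquiv ((y : TS A))).toAdd)) = phiEquiv (y : TS A)
      rw [hBfix _ h1, ofAdd_toAdd]
    rw [h2, MulEquiv.symm_apply_apply]
  exact ⟨⟨α, hα⟩, subgroup_retract_equiv (nabla A) α hα⟩
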